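/- (Signaling direction of Theorem 1.) Let ρ be the canonical two-qubit state with parameters mx, my, mz, m'x, m'y, m'z, Cxx, Cyy, Czz, assumed positive semidefinite, and suppose at least one of my·m'x, my·m'y − Cyy, my·m'z is nonzero. Then there exist α, z, u : ℝ such that Re(trace ρ₊) ≠ 0, Re(trace ρ₋) ≠ 0, and P₊(Π(z,u)) ≠ P₋(Π(z,u)); i.e., Bob can predict Alice's randomly chosen operation with a finite probability bias. -/

import Mathlib

open Matrix Kronecker Complex
open scoped ComplexOrder

noncomputable section

/-- Pauli matrix `σx`. -/
def σx : Matrix (Fin 2) (Fin 2) ℂ := !![0, 1; 1, 0]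

/-- Pauli matrix `σy`. -/
def σy : Matrix (Fin 2) (Fin 2) ℂ := !![0, -Complex.I; Complex.I, 0]

/-- Pauli matrix `σz`. -/
def σz : Matrix (Fin 2) (Fin 2) ℂ := !![1, 0; 0, -1]

/-- The simulated PT-symmetric evolution operator at the chosen time. -/
def Upt (α : ℝ) : Matrix (Fin 2) (Fin 2) ℂ :=
  !![(Real.sin α : ℂ), -Complex.I; -Complex.I, -(Real.sin α : ℂ)]

/-- Alice's operation `A₊` (do nothing). -/
def Apos : Matrix (Fin 2) (Fin 2) ℂ := 1

/-- Alice's operation `A₋` (bit flip `σx`). -/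
def Aneg : Matrix (Fin 2) (Fin 2) ℂ := σx

/-- Unnormalized post-selected state after Alice applies `A₊` followed by the
simulated PT evolution. -/
def postPlus (α : ℝ) (ρ : Matrix (Fin 2 × Fin 2) (Fin 2 × Fin 2) ℂ) :
    Matrix (Fin 2 × Fin 2) (Fin 2 × Fin 2) ℂ :=
  ((Upt α * Apos) ⊗ₖ (1 : Matrix (Fin 2) (Fin 2) ℂ)) * ρ *
    ((Upt α * Apos) ⊗ₖ (1 : Matrix (Fin 2) (Fin 2) ℂ))ᴴ

/-- Unnormalized post-selected state after Alice applies `A₋` followed by the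
simulated PT evolution. -/
def postMinus (α : ℝ) (ρ : Matrix (Fin 2 × Fin 2) (Fin 2 × Fin 2) ℂ) :
    Matrix (Fin 2 × Fin 2) (Fin 2 × Fin 2) ℂ :=
  ((Upt α * Aneg) ⊗ₖ (1 : Matrix (Fin 2) (Fin 2) ℂ)) * ρ *
    ((Upt α * Aneg) ⊗ₖ (1 : Matrix (Fin 2) (Fin 2) ℂ))ᴴ

/-- Probability that Bob obtains outcome `Π` given Alice applied `A₊`. -/
def Pplus (α : ℝ) (ρ : Matrix (Fin 2 × Fin 2) (Fin 2 × Fin 2) ℂ)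
    (Pi : Matrix (Fin 2) (Fin 2) ℂ) : ℝ :=
  ((((1 : Matrix (Fin 2) (Fin 2) ℂ) ⊗ₖ Pi) * postPlus α ρ).trace).re /
    ((postPlus α ρ).trace).re

/-- Probability that Bob obtains outcome `Π` given Alice applied `A₋`. -/
def Pminus (α : ℝ) (ρ : Matrix (Fin 2 × Fin 2) (Fin 2 × Fin 2) ℂ)
    (Pi : Matrix (Fin 2) (Fin 2) ℂ) : ℝ :=
  ((((1 : Matrix (Fin 2) (Fin 2) ℂ) ⊗ₖ Pi) * postMinus α ρ).trace).re /
    ((postMinus α ρ).trace).re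

/-- Bob's `σy`-measurement projector onto `|+_y⟩ = (|0⟩ + i|1⟩)/√2`. -/
def Piy : Matrix (Fin 2) (Fin 2) ℂ :=
  (1/2 : ℂ) • !![1, -Complex.I; Complex.I, 1]

/-- Bob's rank-one projector `Π(z,u)` for an arbitrary projective measurement. -/
def Pizu (z u : ℝ) : Matrix (Fin 2) (Fin 2) ℂ :=
  !![((Real.cos (z/2))^2 : ℂ),
     (Real.cos (z/2) : ℂ) * (Real.sin (z/2) : ℂ) * Complex.exp (-(Complex.I * u));
     (Real.cos (z/2) : ℂ) * (Real.sin (z/2) : ℂ) * Complex.exp (Complex.I * u),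
     ((Real.sin (z/2))^2 : ℂ)]

/-- The single-qubit state `|+⟩ = (|0⟩ + |1⟩)/√2`. -/
def ketPlus : Fin 2 → ℂ := ![((1 / Real.sqrt 2 : ℝ) : ℂ), ((1 / Real.sqrt 2 : ℝ) : ℂ)]

/-- The single-qubit state `|−⟩ = (|0⟩ − |1⟩)/√2`. -/
def ketMinus : Fin 2 → ℂ := ![((1 / Real.sqrt 2 : ℝ) : ℂ), ((-(1 / Real.sqrt 2) : ℝ) : ℂ)]

/-- The (normalized) pure state `|ψ_{β,γ}⟩ = (β|++⟩ + γ|−−⟩)/√(β²+γ²)`. -/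
def ψpure (β γ : ℝ) : Fin 2 × Fin 2 → ℂ := fun q =>
  ((β : ℂ) * (ketPlus q.1 * ketPlus q.2) + (γ : ℂ) * (ketMinus q.1 * ketMinus q.2)) /
    ((Real.sqrt (β^2 + γ^2) : ℝ) : ℂ)

/-- The pure two-qubit density matrix `ρ_{β,γ} = |ψ_{β,γ}⟩⟨ψ_{β,γ}|`. -/
def ρpure (β γ : ℝ) : Matrix (Fin 2 × Fin 2) (Fin 2 × Fin 2) ℂ :=
  Matrix.vecMulVec (ψpure β γ) (fun q => starRingEnd ℂ (ψpure β γ q))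

/-- The maximally entangled state `|ψ⁺⟩ = (|00⟩ + |11⟩)/√2`. -/
def ψmax : Fin 2 × Fin 2 → ℂ := fun q =>
  if q.1 = q.2 then ((1 / Real.sqrt 2 : ℝ) : ℂ) else 0

/-- The two-qubit Werner state `ρ_W(p) = p |ψ⁺⟩⟨ψ⁺| + ((1-p)/4) 1`. -/
def ρWerner (p : ℝ) : Matrix (Fin 2 × Fin 2) (Fin 2 × Fin 2) ℂ :=
  (p : ℂ) • Matrix.vecMulVec ψmax (fun q => starRingEnd ℂ (ψmax q)) +
    (((1 - p) / 4 : ℝ) : ℂ) • 1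

/-- The canonical two-qubit state with magnetizations `mx my mz` (Alice),
`nx ny nz` (Bob) and diagonal correlators `Cxx Cyy Czz`. -/
def ρcan (mx my mz nx ny nz Cxx Cyy Czz : ℝ) :
    Matrix (Fin 2 × Fin 2) (Fin 2 × Fin 2) ℂ :=
  (1/4 : ℂ) • ((1 : Matrix (Fin 2 × Fin 2) (Fin 2 × Fin 2) ℂ)
    + (mx : ℂ) • (σx ⊗ₖ (1 : Matrix (Fin 2) (Fin 2) ℂ))
    + (my : ℂ) • (σy ⊗ₖ (1 : Matrix (Fin 2) (Fin 2) ℂ))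
    + (mz : ℂ) • (σz ⊗ₖ (1 : Matrix (Fin 2) (Fin 2) ℂ))
    + (nx : ℂ) • ((1 : Matrix (Fin 2) (Fin 2) ℂ) ⊗ₖ σx)
    + (ny : ℂ) • ((1 : Matrix (Fin 2) (Fin 2) ℂ) ⊗ₖ σy)
    + (nz : ℂ) • ((1 : Matrix (Fin 2) (Fin 2) ℂ) ⊗ₖ σz)
    + (Cxx : ℂ) • (σx ⊗ₖ σx)
    + (Cyy : ℂ) • (σy ⊗ₖ σy)
    + (Czz : ℂ) • (σz ⊗ₖ σz))

/-- Bob's reduced matrix: the partial trace over Alice's subsystem. -/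
def ptraceA (X : Matrix (Fin 2 × Fin 2) (Fin 2 × Fin 2) ℂ) :
    Matrix (Fin 2) (Fin 2) ℂ :=
  Matrix.of fun i j => ∑ k : Fin 2, X (k, i) (k, j)

/-- The trace distance `T(A,B) = (1/2) tr √((A-B)ᴴ (A-B))`, where the square
root is the positive semidefinite square root. -/
def traceDist (A B : Matrix (Fin 2) (Fin 2) ℂ) : ℝ :=
  (1/2) * ((((Matrix.posSemidef_conjTranspose_mul_self (A - B)).isHermitian.eigenvectorUnitary :
      Matrix (Fin 2) (Fin 2) ℂ) *
    Matrix.diagonal (((↑) : ℝ → ℂ) ∘ Real.sqrt ∘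
      (Matrix.posSemidef_conjTranspose_mul_self (A - B)).isHermitian.eigenvalues) *
    (star (Matrix.posSemidef_conjTranspose_mul_self (A - B)).isHermitian.eigenvectorUnitary :
      Matrix (Fin 2) (Fin 2) ℂ)).trace).re

open scoped Matrix in
lemma kron_conjT (A B : Matrix (Fin 2) (Fin 2) ℂ) :
    (A ⊗ₖ B)ᴴ = Aᴴ ⊗ₖ Bᴴ := by
  ext i j
  simp [Matrix.conjTranspose_apply, Matrix.kroneckerMap_apply]

lemma trace_conj (X Y ρ : Matrix (Fin 2 × Fin 2) (Fin 2 × Fin 2) ℂ) :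
    (X * (Y * ρ * Yᴴ)).trace = ((Yᴴ * X * Y) * ρ).trace := by
  rw [show X * (Y * ρ * Yᴴ) = (X * Y * ρ) * Yᴴ by noncomm_ring,
    Matrix.trace_mul_comm]
  noncomm_ring

lemma trace_conj' (Y ρ : Matrix (Fin 2 × Fin 2) (Fin 2 × Fin 2) ℂ) :
    (Y * ρ * Yᴴ).trace = ((Yᴴ * Y) * ρ).trace := by
  rw [Matrix.trace_mul_comm]; noncomm_ring
lemma key (H K : Matrix (Fin 2) (Fin 2) ℂ) (mx my mz nx ny nz Cxx Cyy Czz : ℝ) :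
    ((H ⊗ₖ K) * ρcan mx my mz nx ny nz Cxx Cyy Czz).trace =
    (1/4) * (H.trace * K.trace
      + mx * ((H * σx).trace * K.trace)
      + my * ((H * σy).trace * K.trace)
      + mz * ((H * σz).trace * K.trace)
      + nx * (H.trace * (K * σx).trace)
      + ny * (H.trace * (K * σy).trace)
      + nz * (H.trace * (K * σz).trace)
      + Cxx * ((H * σx).trace * (K * σx).trace)
      + Cyy * ((H * σy).trace * (K * σy).trace)
      + Czz * ((H * σz).trace * (K * σz).trace)) := by
  have e : ∀ A B : Matrix (Fin 2) (Fin 2) ℂ,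
      (H ⊗ₖ K) * (A ⊗ₖ B) = (H * A) ⊗ₖ (K * B) := fun A B =>
    (Matrix.mul_kronecker_mul H A K B).symm
  rw [ρcan, ← Matrix.one_kronecker_one (α := ℂ) (m := Fin 2) (n := Fin 2)]
  simp only [Matrix.mul_smul, Matrix.mul_add, Matrix.trace_add, Matrix.trace_smul, e,
    Matrix.trace_kronecker, Matrix.mul_one, smul_eq_mul]

def Hmat (c d : ℝ) : Matrix (Fin 2) (Fin 2) ℂ :=
  !![(c : ℂ), -(d : ℂ) * Complex.I; (d : ℂ) * Complex.I, (c : ℂ)]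

lemma Hplus_eq (α : ℝ) :
    (Upt α * Apos)ᴴ * (Upt α * Apos) = Hmat (1 + (Real.sin α)^2) (2 * Real.sin α) := by
  obtain ⟨s, hs⟩ : ∃ s, Real.sin α = s := ⟨_, rfl⟩
  ext i j
  fin_cases i <;> fin_cases j <;>
    simp [Upt, Apos, Hmat, hs, Matrix.mul_apply, Fin.sum_univ_two, Matrix.conjTranspose_apply,
      Complex.ext_iff] <;> (try simp [← Complex.ofReal_pow]) <;> try ring

lemma Hminus_eq (α : ℝ) :
    (Upt α * Aneg)ᴴ * (Upt α * Aneg) = Hmat (1 + (Real.sin α)^2) (-(2 * Real.sin α)) := by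
  obtain ⟨s, hs⟩ : ∃ s, Real.sin α = s := ⟨_, rfl⟩
  ext i j
  fin_cases i <;> fin_cases j <;>
    simp [Upt, Aneg, σx, Hmat, hs, Matrix.mul_apply, Fin.sum_univ_two,
      Matrix.conjTranspose_apply, Complex.ext_iff] <;> (try simp [← Complex.ofReal_pow]) <;> try ring

lemma Hmat_trace (c d : ℝ) : (Hmat c d).trace = 2 * c := by
  simp [Hmat, Matrix.trace_fin_two]; ring
lemma Hmat_x (c d : ℝ) : (Hmat c d * σx).trace = 0 := by
  simp [Hmat, σx, Matrix.trace_fin_two, Matrix.mul_apply, Fin.sum_univ_two, Complex.ext_iff]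
  try ring_nf
  try simp
lemma Hmat_y (c d : ℝ) : (Hmat c d * σy).trace = 2 * d := by
  simp [Hmat, σy, Matrix.trace_fin_two, Matrix.mul_apply, Fin.sum_univ_two, Complex.ext_iff]
  try ring_nf
  try simp
lemma Hmat_z (c d : ℝ) : (Hmat c d * σz).trace = 0 := by
  simp [Hmat, σz, Matrix.trace_fin_two, Matrix.mul_apply, Fin.sum_univ_two, Complex.ext_iff]
  try ring_nf
  try simp
lemma sqrt2_sq : ((Real.sqrt 2 : ℝ) : ℂ)^2 = 2 := by
  rw [← Complex.ofReal_pow, Real.sq_sqrt (by norm_num : (2:ℝ) ≥ 0)]; norm_num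

lemma exp_pos_half : Complex.exp (Complex.I * ↑Real.pi * (1/2 : ℂ)) = Complex.I := by
  rw [show Complex.I * ↑Real.pi * (1/2 : ℂ) = (((Real.pi/2) : ℝ) : ℂ) * Complex.I by
    push_cast; ring, Complex.exp_mul_I]
  simp [← Complex.ofReal_cos, ← Complex.ofReal_sin, Real.cos_pi_div_two, Real.sin_pi_div_two]

lemma exp_neg_half : Complex.exp (Complex.I * ↑Real.pi * (-1/2 : ℂ)) = -Complex.I := by
  rw [show Complex.I * ↑Real.pi * (-1/2 : ℂ) = ((-(Real.pi/2) : ℝ) : ℂ) * Complex.I by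
    push_cast; ring, Complex.exp_mul_I]
  simp [← Complex.ofReal_cos, ← Complex.ofReal_sin, Real.cos_pi_div_two, Real.sin_pi_div_two]

lemma K1_eq : Pizu (Real.pi/2) 0 = !![(1/2 : ℂ), 1/2; 1/2, 1/2] := by
  have h : Real.pi/2/2 = Real.pi/4 := by ring
  ext i j
  fin_cases i <;> fin_cases j <;>
    simp [Pizu, h, Real.cos_pi_div_four, Real.sin_pi_div_four] <;>
    ring_nf <;> rw [sqrt2_sq] <;> norm_num

lemma K2_eq : Pizu (Real.pi/2) (Real.pi/2) =
    !![(1/2 : ℂ), -(Complex.I/2); Complex.I/2, (1/2 : ℂ)] := by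
  have h : Real.pi/2/2 = Real.pi/4 := by ring
  ext i j
  fin_cases i <;> fin_cases j <;>
    simp [Pizu, h, Real.cos_pi_div_four, Real.sin_pi_div_four] <;>
    ring_nf <;> rw [sqrt2_sq] <;> (try rw [exp_pos_half]) <;> (try rw [exp_neg_half]) <;>
    ring_nf <;> norm_num

lemma K3_eq : Pizu 0 0 = !![(1 : ℂ), 0; 0, 0] := by
  ext i j
  fin_cases i <;> fin_cases j <;> norm_num [Pizu]
section traces
open Matrix

lemma one_trace : (1 : Matrix (Fin 2) (Fin 2) ℂ).trace = 2 := by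
  simp [Matrix.trace_fin_two]
  try norm_num

lemma one_x : ((1 : Matrix (Fin 2) (Fin 2) ℂ) * σx).trace = 0 := by
  simp [σx, Matrix.trace_fin_two]
lemma one_y : ((1 : Matrix (Fin 2) (Fin 2) ℂ) * σy).trace = 0 := by
  simp [σy, Matrix.trace_fin_two]
lemma one_z : ((1 : Matrix (Fin 2) (Fin 2) ℂ) * σz).trace = 0 := by
  simp [σz, Matrix.trace_fin_two]

lemma Kgen_trace (a b c d : ℂ) : (!![a,b;c,d] : Matrix (Fin 2) (Fin 2) ℂ).trace = a + d := by
  simp [Matrix.trace_fin_two]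
lemma Kgen_x (a b c d : ℂ) : ((!![a,b;c,d] : Matrix (Fin 2) (Fin 2) ℂ) * σx).trace = b + c := by
  simp [σx, Matrix.trace_fin_two, Matrix.mul_apply, Fin.sum_univ_two]
lemma Kgen_y (a b c d : ℂ) :
    ((!![a,b;c,d] : Matrix (Fin 2) (Fin 2) ℂ) * σy).trace = Complex.I * (b - c) := by
  simp [σy, Matrix.trace_fin_two, Matrix.mul_apply, Fin.sum_univ_two]; ring
lemma Kgen_z (a b c d : ℂ) : ((!![a,b;c,d] : Matrix (Fin 2) (Fin 2) ℂ) * σz).trace = a - d := by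
  simp [σz, Matrix.trace_fin_two, Matrix.mul_apply, Fin.sum_univ_two]; ring

end traces

/-- Master formula: trace of `(Hmat c d ⊗ K) * ρcan` for `K` with given Pauli traces. -/
lemma master (c d tx ty tz : ℝ) (K : Matrix (Fin 2) (Fin 2) ℂ)
    (mx my mz nx ny nz Cxx Cyy Czz : ℝ)
    (h0 : K.trace = 1) (hx : (K * σx).trace = tx) (hy : (K * σy).trace = ty)
    (hz : (K * σz).trace = tz) :
    ((Hmat c d ⊗ₖ K) * ρcan mx my mz nx ny nz Cxx Cyy Czz).trace =
      (((1/2) * (c + my * d + c * (nx * tx + ny * ty + nz * tz) + Cyy * d * ty) : ℝ) : ℂ) := by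
  rw [key, Hmat_trace, Hmat_x, Hmat_y, Hmat_z, h0, hx, hy, hz]
  push_cast; ring

/-- Master formula for `K = 1`. -/
lemma master_one (c d : ℝ) (mx my mz nx ny nz Cxx Cyy Czz : ℝ) :
    ((Hmat c d ⊗ₖ (1 : Matrix (Fin 2) (Fin 2) ℂ)) * ρcan mx my mz nx ny nz Cxx Cyy Czz).trace =
      (((c + my * d) : ℝ) : ℂ) := by
  rw [key, Hmat_trace, Hmat_x, Hmat_y, Hmat_z, one_trace, one_x, one_y, one_z]
  push_cast; ring
lemma postPlus_reduce (α : ℝ) (ρ : Matrix (Fin 2 × Fin 2) (Fin 2 × Fin 2) ℂ)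
    (X : Matrix (Fin 2) (Fin 2) ℂ) :
    ((((1 : Matrix (Fin 2) (Fin 2) ℂ) ⊗ₖ X) * postPlus α ρ)).trace =
      ((((Upt α * Apos)ᴴ * (Upt α * Apos)) ⊗ₖ X) * ρ).trace := by
  rw [postPlus, trace_conj, kron_conjT, Matrix.conjTranspose_one,
    ← Matrix.mul_kronecker_mul, ← Matrix.mul_kronecker_mul,
    Matrix.mul_one, Matrix.one_mul, Matrix.mul_one]

lemma postMinus_reduce (α : ℝ) (ρ : Matrix (Fin 2 × Fin 2) (Fin 2 × Fin 2) ℂ)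
    (X : Matrix (Fin 2) (Fin 2) ℂ) :
    ((((1 : Matrix (Fin 2) (Fin 2) ℂ) ⊗ₖ X) * postMinus α ρ)).trace =
      ((((Upt α * Aneg)ᴴ * (Upt α * Aneg)) ⊗ₖ X) * ρ).trace := by
  rw [postMinus, trace_conj, kron_conjT, Matrix.conjTranspose_one,
    ← Matrix.mul_kronecker_mul, ← Matrix.mul_kronecker_mul,
    Matrix.mul_one, Matrix.one_mul, Matrix.mul_one]

lemma postPlus_trace (α : ℝ) (ρ : Matrix (Fin 2 × Fin 2) (Fin 2 × Fin 2) ℂ) :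
    (postPlus α ρ).trace = ((((Upt α * Apos)ᴴ * (Upt α * Apos)) ⊗ₖ
      (1 : Matrix (Fin 2) (Fin 2) ℂ)) * ρ).trace := by
  rw [postPlus, trace_conj', kron_conjT, Matrix.conjTranspose_one,
    ← Matrix.mul_kronecker_mul, Matrix.mul_one]

lemma postMinus_trace (α : ℝ) (ρ : Matrix (Fin 2 × Fin 2) (Fin 2 × Fin 2) ℂ) :
    (postMinus α ρ).trace = ((((Upt α * Aneg)ᴴ * (Upt α * Aneg)) ⊗ₖ
      (1 : Matrix (Fin 2) (Fin 2) ℂ)) * ρ).trace := by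
  rw [postMinus, trace_conj', kron_conjT, Matrix.conjTranspose_one,
    ← Matrix.mul_kronecker_mul, Matrix.mul_one]

/-- Signaling direction of Theorem 1: if at least one of `my m'x`,
`my m'y − Cyy`, `my m'z` is nonzero, then Bob can choose `α`, `z`, `u` so that
the post-selection traces are nonzero and his outcome probabilities differ for
Alice's two operations, i.e. Bob gains information about Alice's operation. -/
theorem stmt9 (mx my mz nx ny nz Cxx Cyy Czz : ℝ)
    (ρ : Matrix (Fin 2 × Fin 2) (Fin 2 × Fin 2) ℂ)
    (hρ : ρ = ρcan mx my mz nx ny nz Cxx Cyy Czz)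
    (hpsd : ρ.PosSemidef)
    (hy : my * nx ≠ 0 ∨ my * ny - Cyy ≠ 0 ∨ my * nz ≠ 0) :
    ∃ α z u : ℝ,
      ((postPlus α ρ).trace).re ≠ 0 ∧
      ((postMinus α ρ).trace).re ≠ 0 ∧
      Pplus α ρ (Pizu z u) ≠ Pminus α ρ (Pizu z u) := by
  classical
  set s : ℝ := 1/(2*(1+|my|)) with hsdef
  have habs : 0 ≤ |my| := abs_nonneg my
  have hspos : 0 < s := by positivity
  have hsle : s ≤ 1 := by
    rw [hsdef, div_le_one (by positivity)]; nlinarith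
  set α : ℝ := Real.arcsin s with hα
  have hsin : Real.sin α = s := Real.sin_arcsin (by linarith) hsle
  have hseq : s * (2*(1+|my|)) = 1 := by rw [hsdef]; field_simp
  have hc : (0:ℝ) < 1 + s^2 := by positivity
  have hDp : 0 < (1 + s^2) + my * (2*s) := by
    nlinarith [neg_abs_le my, sq_nonneg s]
  have hDm : 0 < (1 + s^2) + my * (-(2*s)) := by
    nlinarith [le_abs_self my, sq_nonneg s]
  -- traces of the unnormalized post-selected states
  have TP : ((postPlus α ρ).trace).re = (1 + s^2) + my * (2*s) := by
    rw [hρ, postPlus_trace, Hplus_eq, hsin, master_one, Complex.ofReal_re]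
  have TM : ((postMinus α ρ).trace).re = (1 + s^2) + my * (-(2*s)) := by
    rw [hρ, postMinus_trace, Hminus_eq, hsin, master_one, Complex.ofReal_re]
  rcases hy with hcase | hcase | hcase
  · -- use z = π/2, u = 0 : Bloch vector along x
    refine ⟨α, Real.pi/2, 0, by rw [TP]; exact ne_of_gt hDp, by rw [TM]; exact ne_of_gt hDm, ?_⟩
    have h0 : (Pizu (Real.pi/2) 0).trace = 1 := by rw [K1_eq, Kgen_trace]; norm_num
    have hx : (Pizu (Real.pi/2) 0 * σx).trace = ((1:ℝ):ℂ) := by rw [K1_eq, Kgen_x]; norm_num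
    have hy' : (Pizu (Real.pi/2) 0 * σy).trace = ((0:ℝ):ℂ) := by rw [K1_eq, Kgen_y]; norm_num
    have hz : (Pizu (Real.pi/2) 0 * σz).trace = ((0:ℝ):ℂ) := by rw [K1_eq, Kgen_z]; norm_num
    have NP : ((((1 : Matrix (Fin 2) (Fin 2) ℂ) ⊗ₖ Pizu (Real.pi/2) 0) * postPlus α ρ).trace).re
        = (1/2) * ((1+s^2) + my * (2*s) + (1+s^2) * (nx * 1 + ny * 0 + nz * 0) + Cyy * (2*s) * 0) := by
      rw [hρ, postPlus_reduce, Hplus_eq, hsin, master _ _ _ _ _ _ _ _ _ _ _ _ _ _ _ h0 hx hy' hz,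
        Complex.ofReal_re]
    have NM : ((((1 : Matrix (Fin 2) (Fin 2) ℂ) ⊗ₖ Pizu (Real.pi/2) 0) * postMinus α ρ).trace).re
        = (1/2) * ((1+s^2) + my * (-(2*s)) + (1+s^2) * (nx * 1 + ny * 0 + nz * 0) + Cyy * (-(2*s)) * 0) := by
      rw [hρ, postMinus_reduce, Hminus_eq, hsin, master _ _ _ _ _ _ _ _ _ _ _ _ _ _ _ h0 hx hy' hz,
        Complex.ofReal_re]
    simp only [Pplus, Pminus]
    rw [NP, NM, TP, TM]
    intro h
    rw [div_eq_div_iff (ne_of_gt hDp) (ne_of_gt hDm)] at h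
    have h2 : 2*s*(1+s^2)*(my*nx) = 0 := by linear_combination (-(1:ℝ)) * h
    exact hcase ((mul_eq_zero.mp h2).resolve_left (by positivity))
  · -- use z = π/2, u = π/2 : Bloch vector along y
    refine ⟨α, Real.pi/2, Real.pi/2, by rw [TP]; exact ne_of_gt hDp, by rw [TM]; exact ne_of_gt hDm, ?_⟩
    have h0 : (Pizu (Real.pi/2) (Real.pi/2)).trace = 1 := by rw [K2_eq, Kgen_trace]; norm_num
    have hx : (Pizu (Real.pi/2) (Real.pi/2) * σx).trace = ((0:ℝ):ℂ) := by
      rw [K2_eq, Kgen_x]; norm_num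
    have hy' : (Pizu (Real.pi/2) (Real.pi/2) * σy).trace = ((1:ℝ):ℂ) := by
      rw [K2_eq, Kgen_y]; norm_num [Complex.ext_iff]
    have hz : (Pizu (Real.pi/2) (Real.pi/2) * σz).trace = ((0:ℝ):ℂ) := by
      rw [K2_eq, Kgen_z]; norm_num
    have NP : ((((1 : Matrix (Fin 2) (Fin 2) ℂ) ⊗ₖ Pizu (Real.pi/2) (Real.pi/2)) * postPlus α ρ).trace).re
        = (1/2) * ((1+s^2) + my * (2*s) + (1+s^2) * (nx * 0 + ny * 1 + nz * 0) + Cyy * (2*s) * 1) := by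
      rw [hρ, postPlus_reduce, Hplus_eq, hsin, master _ _ _ _ _ _ _ _ _ _ _ _ _ _ _ h0 hx hy' hz,
        Complex.ofReal_re]
    have NM : ((((1 : Matrix (Fin 2) (Fin 2) ℂ) ⊗ₖ Pizu (Real.pi/2) (Real.pi/2)) * postMinus α ρ).trace).re
        = (1/2) * ((1+s^2) + my * (-(2*s)) + (1+s^2) * (nx * 0 + ny * 1 + nz * 0) + Cyy * (-(2*s)) * 1) := by
      rw [hρ, postMinus_reduce, Hminus_eq, hsin, master _ _ _ _ _ _ _ _ _ _ _ _ _ _ _ h0 hx hy' hz,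
        Complex.ofReal_re]
    simp only [Pplus, Pminus]
    rw [NP, NM, TP, TM]
    intro h
    rw [div_eq_div_iff (ne_of_gt hDp) (ne_of_gt hDm)] at h
    have h2 : 2*s*(1+s^2)*(my*ny - Cyy) = 0 := by linear_combination (-(1:ℝ)) * h
    exact hcase ((mul_eq_zero.mp h2).resolve_left (by positivity))
  · -- use z = 0, u = 0 : Bloch vector along z
    refine ⟨α, 0, 0, by rw [TP]; exact ne_of_gt hDp, by rw [TM]; exact ne_of_gt hDm, ?_⟩
    have h0 : (Pizu 0 0).trace = 1 := by rw [K3_eq, Kgen_trace]; norm_num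
    have hx : (Pizu 0 0 * σx).trace = ((0:ℝ):ℂ) := by rw [K3_eq, Kgen_x]; norm_num
    have hy' : (Pizu 0 0 * σy).trace = ((0:ℝ):ℂ) := by rw [K3_eq, Kgen_y]; norm_num
    have hz : (Pizu 0 0 * σz).trace = ((1:ℝ):ℂ) := by rw [K3_eq, Kgen_z]; norm_num
    have NP : ((((1 : Matrix (Fin 2) (Fin 2) ℂ) ⊗ₖ Pizu 0 0) * postPlus α ρ).trace).re
        = (1/2) * ((1+s^2) + my * (2*s) + (1+s^2) * (nx * 0 + ny * 0 + nz * 1) + Cyy * (2*s) * 0) := by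
      rw [hρ, postPlus_reduce, Hplus_eq, hsin, master _ _ _ _ _ _ _ _ _ _ _ _ _ _ _ h0 hx hy' hz,
        Complex.ofReal_re]
    have NM : ((((1 : Matrix (Fin 2) (Fin 2) ℂ) ⊗ₖ Pizu 0 0) * postMinus α ρ).trace).re
        = (1/2) * ((1+s^2) + my * (-(2*s)) + (1+s^2) * (nx * 0 + ny * 0 + nz * 1) + Cyy * (-(2*s)) * 0) := by
      rw [hρ, postMinus_reduce, Hminus_eq, hsin, master _ _ _ _ _ _ _ _ _ _ _ _ _ _ _ h0 hx hy' hz,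
        Complex.ofReal_re]
    simp only [Pplus, Pminus]
    rw [NP, NM, TP, TM]
    intro h
    rw [div_eq_div_iff (ne_of_gt hDp) (ne_of_gt hDm)] at h
    have h2 : 2*s*(1+s^2)*(my*nz) = 0 := by linear_combination (-(1:ℝ)) * h
    exact hcase ((mul_eq_zero.mp h2).resolve_left (by positivity))
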